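/- arXiv:1803.00465 — 2 statements merged into one kernel-verified Lean document; each statement's English description precedes it below -/
import Mathlib

section
/- Splitting Rule: Let F be a field, and for disjoint finite sets let the product of basis subsets X·Y be X ∪ Y when X ∩ Y = ∅ and 0 otherwise, extended bilinearly. If v ∈ FΩ_k and w ∈ FΩ_ℓ have disjoint supports, then (v·w)φ_t^{k+ℓ} = Σ_{s=0}^{t} (v φ_s^k)·(w φ_{t−s}^ℓ), where φ_t^m sends an m-subset to the sum of its (m−t)-subsets. -/
/-- The free `F`-vector space on the `k`-element subsets of `{1,…,n}` (here `k : ℤ`,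
so that the space is zero for `k < 0`). -/
abbrev FOmega (F : Type*) [Field F] (n : ℕ) (k : ℤ) : Type _ :=
  {s : Finset (Fin n) // (s.card : ℤ) = k} →₀ F

/-- The multistep boundary map `FΩ_a → FΩ_b`, sending a subset `Y` of size `a`
to the sum of all its subsets of size `b` (this is `φ_t^a` with `t = a - b`). -/
noncomputable def phi (F : Type*) [Field F] (n : ℕ) (a b : ℤ) :
    FOmega F n a →ₗ[F] FOmega F n b :=
  Finsupp.lift _ F _ fun Y =>
    ∑ X ∈ (Y.1.powerset.filter fun X => (X.card : ℤ) = b).attach,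
      Finsupp.single ⟨X.1, (Finset.mem_filter.mp X.2).2⟩ (1 : F)

/-- The support of `v ∈ FΩ_k`: the union of the subsets appearing in `v` with a
nonzero coefficient. -/
def suppSet {F : Type*} [Field F] {n : ℕ} {a : ℤ} (v : FOmega F n a) :
    Finset (Fin n) :=
  v.support.sup (fun X => X.1)

/-- The product `FΩ_a × FΩ_b → FΩ_c`: on basis subsets, `X·Y = X ∪ Y` if `X` and `Y`
are disjoint (and this union has size `c`; automatic when `c = a + b`), and `X·Y = 0`
otherwise, extended bilinearly. -/
noncomputable def gmul {F : Type*} [Field F] {n : ℕ} {a b : ℤ} (c : ℤ)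
    (v : FOmega F n a) (w : FOmega F n b) : FOmega F n c :=
  ∑ X ∈ v.support.attach, ∑ Y ∈ w.support.attach,
    if h : Disjoint X.1.1 Y.1.1 ∧ ((X.1.1 ∪ Y.1.1).card : ℤ) = c then
      Finsupp.single ⟨X.1.1 ∪ Y.1.1, h.2⟩ (v X.1 * w Y.1)
    else 0

section Aux
variable {F : Type*} [Field F] {n : ℕ}

/-- basis-ish element: `single Z 1` when `Z` has the right size, else `0`. -/
noncomputable def sgl (F : Type*) [Field F] {n : ℕ} (b : ℤ) (Z : Finset (Fin n)) :
    FOmega F n b :=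
  if h : (Z.card : ℤ) = b then Finsupp.single ⟨Z, h⟩ 1 else 0

/-- elementary product value. -/
noncomputable def Emul (F : Type*) [Field F] {n : ℕ} (c : ℤ) (A B : Finset (Fin n)) :
    FOmega F n c :=
  if h : Disjoint A B ∧ (((A ∪ B).card : ℤ) = c) then Finsupp.single ⟨A ∪ B, h.2⟩ 1 else 0

/-- bilinear version of `gmul`. -/
noncomputable def Bl (F : Type*) [Field F] {n : ℕ} (a b c : ℤ) :
    FOmega F n a →ₗ[F] FOmega F n b →ₗ[F] FOmega F n c :=
  Finsupp.lift _ F _ fun X => Finsupp.lift _ F _ fun Y => Emul F c X.1 Y.1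

lemma Bl_apply {a b c : ℤ} (v : FOmega F n a) (w : FOmega F n b) :
    Bl F a b c v w = ∑ X ∈ v.support, ∑ Y ∈ w.support, (v X * w Y) • Emul F c X.1 Y.1 := by
  simp only [Bl, Finsupp.lift_apply, Finsupp.sum, LinearMap.coe_sum, Finset.sum_apply,
    LinearMap.smul_apply, Finset.smul_sum, smul_smul]

lemma gmul_eq_Bl {a b c : ℤ} (v : FOmega F n a) (w : FOmega F n b) :
    gmul c v w = Bl F a b c v w := by
  rw [Bl_apply, gmul]
  have step : ∀ (X : {s : Finset (Fin n) // (s.card : ℤ) = a})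
      (Y : {s : Finset (Fin n) // (s.card : ℤ) = b}),
      (if h : Disjoint X.1 Y.1 ∧ ((X.1 ∪ Y.1).card : ℤ) = c then
        Finsupp.single ⟨X.1 ∪ Y.1, h.2⟩ (v X * w Y) else 0) = (v X * w Y) • Emul F c X.1 Y.1 := by
    intro X Y
    rw [Emul]
    split
    · rw [Finsupp.smul_single, smul_eq_mul, mul_one]
    · rw [smul_zero]
  calc (∑ X ∈ v.support.attach, ∑ Y ∈ w.support.attach,
        if h : Disjoint X.1.1 Y.1.1 ∧ ((X.1.1 ∪ Y.1.1).card : ℤ) = c then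
          Finsupp.single ⟨X.1.1 ∪ Y.1.1, h.2⟩ (v X.1 * w Y.1) else 0)
      = ∑ X ∈ v.support.attach, ∑ Y ∈ w.support.attach, (v X.1 * w Y.1) • Emul F c X.1.1 Y.1.1 := by
        exact Finset.sum_congr rfl fun X _ => Finset.sum_congr rfl fun Y _ => step X.1 Y.1
    _ = ∑ X ∈ v.support, ∑ Y ∈ w.support, (v X * w Y) • Emul F c X.1 Y.1 := by
        trans ∑ X ∈ v.support.attach, ∑ Y ∈ w.support, (v X.1 * w Y) • Emul F c X.1.1 Y.1
        · exact Finset.sum_congr rfl fun X _ =>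
            Finset.sum_attach _ (fun Y => (v X.1 * w Y) • Emul F c X.1.1 Y.1)
        · exact Finset.sum_attach _ (fun X => ∑ Y ∈ w.support, (v X * w Y) • Emul F c X.1 Y.1)

lemma phi_single {a b : ℤ} (Y : {s : Finset (Fin n) // (s.card : ℤ) = a}) :
    phi F n a b (Finsupp.single Y 1) =
      ∑ Z ∈ Y.1.powerset.filter (fun Z => (Z.card : ℤ) = b), sgl F b Z := by
  rw [phi, Finsupp.lift_apply, Finsupp.sum_single_index (by simp), one_smul,
    ← Finset.sum_attach (Y.1.powerset.filter (fun Z => (Z.card : ℤ) = b)) (fun Z => sgl F b Z)]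
  refine Finset.sum_congr rfl fun X _ => ?_
  rw [sgl, dif_pos]

lemma Bl_single_single {a b c : ℤ} (X : {s : Finset (Fin n) // (s.card : ℤ) = a})
    (Y : {s : Finset (Fin n) // (s.card : ℤ) = b}) :
    Bl F a b c (Finsupp.single X 1) (Finsupp.single Y 1) = Emul F c X.1 Y.1 := by
  rw [Bl, Finsupp.lift_apply, Finsupp.sum_single_index (by simp), one_smul,
    Finsupp.lift_apply, Finsupp.sum_single_index (by simp), one_smul]

end Aux

section Core
variable {n : ℕ} {M : Type*} [AddCommMonoid M]

lemma core_sum (A B : Finset (Fin n)) (hd : Disjoint A B) (t : ℕ) (f : Finset (Fin n) → M) :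
    ∑ Z ∈ (A ∪ B).powerset.filter (fun Z => (Z.card : ℤ) = (A.card : ℤ) + B.card - t), f Z =
      ∑ s ∈ Finset.range (t + 1),
        ∑ Z1 ∈ A.powerset.filter (fun Z1 => (Z1.card : ℤ) = (A.card : ℤ) - s),
          ∑ Z2 ∈ B.powerset.filter (fun Z2 => (Z2.card : ℤ) = (B.card : ℤ) - ((t - s : ℕ) : ℤ)),
            f (Z1 ∪ Z2) := by
  have hstep1 : ∑ Z ∈ (A ∪ B).powerset.filter
        (fun Z => (Z.card : ℤ) = (A.card : ℤ) + B.card - t), f Z =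
      ∑ p ∈ (A.powerset ×ˢ B.powerset).filter
        (fun p => (p.1.card : ℤ) + p.2.card = (A.card : ℤ) + B.card - t), f (p.1 ∪ p.2) := by
    refine Finset.sum_nbij' (fun Z => (Z ∩ A, Z ∩ B)) (fun p => p.1 ∪ p.2) ?_ ?_ ?_ ?_ ?_
    · intro Z hZ
      simp only [Finset.mem_filter, Finset.mem_powerset] at hZ
      have hsplit : (Z ∩ A) ∪ (Z ∩ B) = Z := by
        rw [← Finset.inter_union_distrib_left, Finset.inter_eq_left.mpr hZ.1]
      have hdis : Disjoint (Z ∩ A) (Z ∩ B) :=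
        hd.mono (Finset.inter_subset_right) (Finset.inter_subset_right)
      have hcard : (Z ∩ A).card + (Z ∩ B).card = Z.card := by
        rw [← Finset.card_union_of_disjoint hdis, hsplit]
      simp only [Finset.mem_filter, Finset.mem_product, Finset.mem_powerset]
      refine ⟨⟨Finset.inter_subset_right, Finset.inter_subset_right⟩, ?_⟩
      have := hZ.2
      push_cast [← hcard] at this ⊢
      omega
    · intro p hp
      simp only [Finset.mem_filter, Finset.mem_product, Finset.mem_powerset] at hp
      have hdis : Disjoint p.1 p.2 := hd.mono hp.1.1 hp.1.2
      simp only [Finset.mem_filter, Finset.mem_powerset]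
      refine ⟨Finset.union_subset_union hp.1.1 hp.1.2, ?_⟩
      rw [Finset.card_union_of_disjoint hdis]
      push_cast
      exact hp.2
    · intro Z hZ
      simp only [Finset.mem_filter, Finset.mem_powerset] at hZ
      show (Z ∩ A) ∪ (Z ∩ B) = Z
      rw [← Finset.inter_union_distrib_left, Finset.inter_eq_left.mpr hZ.1]
    · intro p hp
      simp only [Finset.mem_filter, Finset.mem_product, Finset.mem_powerset] at hp
      have h1 : (p.1 ∪ p.2) ∩ A = p.1 := by
        rw [Finset.union_inter_distrib_right, Finset.inter_eq_left.mpr hp.1.1,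
          Finset.disjoint_iff_inter_eq_empty.mp (hd.symm.mono_left hp.1.2), Finset.union_empty]
      have h2 : (p.1 ∪ p.2) ∩ B = p.2 := by
        rw [Finset.union_inter_distrib_right, Finset.inter_eq_left.mpr hp.1.2,
          Finset.disjoint_iff_inter_eq_empty.mp (hd.mono_left hp.1.1), Finset.empty_union]
      exact Prod.ext h1 h2
    · intro Z hZ
      simp only [Finset.mem_filter, Finset.mem_powerset] at hZ
      show f Z = f ((Z ∩ A) ∪ (Z ∩ B))
      rw [← Finset.inter_union_distrib_left, Finset.inter_eq_left.mpr hZ.1]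
  rw [hstep1]
  have hmaps : ∀ p ∈ (A.powerset ×ˢ B.powerset).filter
      (fun p => (p.1.card : ℤ) + p.2.card = (A.card : ℤ) + B.card - t),
      A.card - p.1.card ∈ Finset.range (t + 1) := by
    intro p hp
    simp only [Finset.mem_filter, Finset.mem_product, Finset.mem_powerset] at hp
    have c1 := Finset.card_le_card hp.1.1
    have c2 := Finset.card_le_card hp.1.2
    have := hp.2
    simp only [Finset.mem_range]
    omega
  rw [← Finset.sum_fiberwise_of_maps_to hmaps (fun p => f (p.1 ∪ p.2))]
  refine Finset.sum_congr rfl fun s hs => ?_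
  rw [Finset.mem_range] at hs
  have hset : ((A.powerset ×ˢ B.powerset).filter
        (fun p => (p.1.card : ℤ) + p.2.card = (A.card : ℤ) + B.card - t)).filter
        (fun p => A.card - p.1.card = s) =
      (A.powerset.filter (fun Z1 => (Z1.card : ℤ) = (A.card : ℤ) - s)) ×ˢ
        (B.powerset.filter (fun Z2 => (Z2.card : ℤ) = (B.card : ℤ) - ((t - s : ℕ) : ℤ))) := by
    ext p
    simp only [Finset.mem_filter, Finset.mem_product, Finset.mem_powerset]
    constructor
    · rintro ⟨⟨⟨h1, h2⟩, h3⟩, h4⟩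
      have c1 := Finset.card_le_card h1
      have c2 := Finset.card_le_card h2
      exact ⟨⟨h1, by omega⟩, h2, by omega⟩
    · rintro ⟨⟨h1, h3⟩, h2, h4⟩
      have c1 := Finset.card_le_card h1
      have c2 := Finset.card_le_card h2
      exact ⟨⟨⟨h1, h2⟩, by omega⟩, by omega⟩
  rw [hset, Finset.sum_product]

end Core

section Point
variable {F : Type*} [Field F] {n : ℕ}

lemma core_point (t : ℕ) (A B : Finset (Fin n)) (hd : Disjoint A B)
    (k l : ℤ) (hA : (A.card : ℤ) = k) (hB : (B.card : ℤ) = l) :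
    phi F n (k + l) (k + l - t) (Emul F (k + l) A B) =
      ∑ s ∈ Finset.range (t + 1),
        Bl F (k - s) (l - ((t - s : ℕ) : ℤ)) (k + l - t)
          (phi F n k (k - s) (Finsupp.single ⟨A, hA⟩ 1))
          (phi F n l (l - ((t - s : ℕ) : ℤ)) (Finsupp.single ⟨B, hB⟩ 1)) := by
  subst hA; subst hB
  have hcup : (((A ∪ B).card : ℤ)) = (A.card : ℤ) + B.card := by
    rw [Finset.card_union_of_disjoint hd]; push_cast; ring
  have hE : Emul F ((A.card : ℤ) + B.card) A B = Finsupp.single ⟨A ∪ B, hcup⟩ 1 := by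
    rw [Emul, dif_pos ⟨hd, hcup⟩]
  rw [hE, phi_single (a := (A.card : ℤ) + B.card) ⟨A ∪ B, hcup⟩,
    core_sum A B hd t (sgl F ((A.card : ℤ) + B.card - t))]
  refine Finset.sum_congr rfl fun s hs => ?_
  rw [Finset.mem_range] at hs
  rw [phi_single, phi_single]
  simp only [map_sum, LinearMap.coe_sum, Finset.sum_apply]
  rw [Finset.sum_comm]
  refine Finset.sum_congr rfl fun Z2 h2 => ?_
  refine Finset.sum_congr rfl fun Z1 h1 => ?_
  simp only [Finset.mem_filter, Finset.mem_powerset] at h1 h2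
  have hd12 : Disjoint Z1 Z2 := hd.mono h1.1 h2.1
  have hc12 : ((Z1 ∪ Z2).card : ℤ) = (A.card : ℤ) + B.card - t := by
    rw [Finset.card_union_of_disjoint hd12]
    push_cast
    have := h1.2; have := h2.2
    omega
  simp only [sgl, Emul, dif_pos h1.2, dif_pos h2.2, dif_pos hc12,
    dif_pos (show Disjoint Z1 Z2 ∧ ((Z1 ∪ Z2).card : ℤ) = (A.card : ℤ) + B.card - t from
      ⟨hd12, hc12⟩), Bl_single_single]

end Point

/-- Splitting Rule: if `v ∈ FΩ_k` and `w ∈ FΩ_ℓ` have disjoint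
supports, then `(v·w) φ_t^{k+ℓ} = ∑_{s=0}^{t} (v φ_s^k) · (w φ_{t-s}^ℓ)`. -/
theorem splitting_rule (F : Type*) [Field F] (n : ℕ) (k l : ℤ) (t : ℕ)
    (v : FOmega F n k) (w : FOmega F n l)
    (hdisj : Disjoint (suppSet v) (suppSet w)) :
    phi F n (k + l) (k + l - t) (gmul (k + l) v w) =
      ∑ s ∈ Finset.range (t + 1),
        gmul (k + l - t) (phi F n k (k - s) v) (phi F n l (l - ((t - s : ℕ) : ℤ)) w) := by
  have hAB : ∀ X ∈ v.support, ∀ Y ∈ w.support, Disjoint X.1 Y.1 := by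
    intro X hX Y hY
    exact hdisj.mono (Finset.le_sup (f := fun X => X.1) hX)
      (Finset.le_sup (f := fun Y => Y.1) hY)
  have expand : ∀ (a' b' : ℤ),
      gmul (k + l - t) (phi F n k a' v) (phi F n l b' w) =
        ∑ A ∈ v.support, ∑ B ∈ w.support, (v A * w B) •
          Bl F a' b' (k + l - t) (phi F n k a' (Finsupp.single A 1))
            (phi F n l b' (Finsupp.single B 1)) := by
    intro a' b'
    rw [gmul_eq_Bl]
    have hv : v = ∑ A ∈ v.support, (v A) • Finsupp.single A (1 : F) := by
      conv_lhs => rw [← Finsupp.sum_single v]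
      rw [Finsupp.sum]
      exact Finset.sum_congr rfl fun A _ => by
        rw [Finsupp.smul_single, smul_eq_mul, mul_one]
    have hw : w = ∑ B ∈ w.support, (w B) • Finsupp.single B (1 : F) := by
      conv_lhs => rw [← Finsupp.sum_single w]
      rw [Finsupp.sum]
      exact Finset.sum_congr rfl fun B _ => by
        rw [Finsupp.smul_single, smul_eq_mul, mul_one]
    conv_lhs => rw [hv, hw]
    simp only [map_sum, map_smul, LinearMap.coe_sum, Finset.sum_apply, LinearMap.smul_apply,
      Finset.smul_sum, smul_smul]
    rw [Finset.sum_comm]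
    exact Finset.sum_congr rfl fun A _ => Finset.sum_congr rfl fun B _ => by rw [mul_comm (w B)]
  rw [gmul_eq_Bl, Bl_apply]
  simp only [map_sum, map_smul]
  have hR : (∑ s ∈ Finset.range (t + 1),
        gmul (k + l - t) (phi F n k (k - s) v) (phi F n l (l - ((t - s : ℕ) : ℤ)) w)) =
      ∑ s ∈ Finset.range (t + 1), ∑ A ∈ v.support, ∑ B ∈ w.support, (v A * w B) •
        Bl F (k - s) (l - ((t - s : ℕ) : ℤ)) (k + l - t)
          (phi F n k (k - s) (Finsupp.single A 1))
          (phi F n l (l - ((t - s : ℕ) : ℤ)) (Finsupp.single B 1)) :=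
    Finset.sum_congr rfl fun s _ => expand (k - s) (l - ((t - s : ℕ) : ℤ))
  rw [hR]
  conv_rhs => rw [Finset.sum_comm]
  refine Finset.sum_congr rfl fun A hA => ?_
  conv_rhs => rw [Finset.sum_comm]
  refine Finset.sum_congr rfl fun B hB => ?_
  rw [← Finset.smul_sum]
  exact congrArg _ (core_point t A.1 B.1 (hAB A hA B hB) k l A.2 B.2)
end

section
/- Suspension Lemma: Let F have characteristic 2, let t ≥ 1 and 0 ≤ ℓ < t. Suppose v ∈ FΩ_k satisfies v φ_s^k = 0 for all s with ℓ < s ≤ t, and the support of v is disjoint from a set X of size ℓ + t. If C(ℓ+t, ℓ) is odd and C(ℓ + (t−s), ℓ) is even for all 0 < s ≤ ℓ, then v = (v · (X φ_ℓ^{ℓ+t})) φ_t^{k+t}. -/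
lemma coeff_phi (F : Type*) [Field F] (n : ℕ) (a b : ℤ) (u : FOmega F n a)
    (B : Finset (Fin n)) (hB : (B.card : ℤ) = b) :
    phi F n a b u ⟨B, hB⟩ =
      ∑ Y ∈ u.support, if B ⊆ Y.1 then u Y else 0 := by
  rw [phi, Finsupp.lift_apply, Finsupp.sum_apply, Finsupp.sum]
  refine Finset.sum_congr rfl fun Y hY => ?_
  rw [Finsupp.smul_apply, Finsupp.finset_sum_apply]
  have h1 : ∀ (Z : {x // x ∈ Y.1.powerset.filter fun Z => (Z.card : ℤ) = b}),
      (Finsupp.single (⟨Z.1, (Finset.mem_filter.mp Z.2).2⟩ :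
        {s : Finset (Fin n) // (s.card : ℤ) = b}) (1:F)) ⟨B, hB⟩
      = if Z.1 = B then 1 else 0 := by
    intro Z
    rw [Finsupp.single_apply]
    congr 1
    simp [Subtype.ext_iff]
  rw [Finset.sum_congr rfl fun Z _ => h1 Z,
    Finset.sum_attach _ (fun Z => if Z = B then (1:F) else 0),
    Finset.sum_ite_eq' _ B (fun _ => (1:F))]
  by_cases h : B ⊆ Y.1
  · have : B ∈ Y.1.powerset.filter fun Z => (Z.card : ℤ) = b := by
      simp [Finset.mem_filter, Finset.mem_powerset, h, hB]
    rw [if_pos this, if_pos h, smul_eq_mul, mul_one]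
  · have : B ∉ Y.1.powerset.filter fun Z => (Z.card : ℤ) = b := by
      simp [Finset.mem_filter, Finset.mem_powerset, h]
    rw [if_neg this, if_neg h, smul_zero]


lemma coeff_phi_single (F : Type*) [Field F] (n : ℕ) (a b : ℤ)
    (Z : Finset (Fin n)) (hZ : (Z.card : ℤ) = a) (c : F)
    (B : Finset (Fin n)) (hB : (B.card : ℤ) = b) :
    phi F n a b (Finsupp.single ⟨Z, hZ⟩ c) ⟨B, hB⟩ = if B ⊆ Z then c else 0 := by
  rw [coeff_phi]
  by_cases hc : c = 0
  · simp [hc]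
  · rw [Finsupp.support_single_ne_zero _ hc, Finset.sum_singleton, Finsupp.single_eq_same]

lemma count_supersets {α : Type*} [DecidableEq α] (X S : Finset α) (hS : S ⊆ X)
    (t : ℕ) (hj : S.card ≤ t) :
    ((X.powerset.filter fun T => (T.card : ℤ) = (t : ℤ)).filter fun T => S ⊆ T).card
      = (X.card - S.card).choose (t - S.card) := by
  rw [← Finset.card_sdiff_of_subset hS, ← Finset.card_powersetCard]
  apply Finset.card_bij (fun T _ => T \ S)
  · intro T hT
    simp only [Finset.mem_filter, Finset.mem_powerset] at hT
    obtain ⟨⟨hTX, hTc⟩, hST⟩ := hT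
    have hTc' : T.card = t := by exact_mod_cast hTc
    rw [Finset.mem_powersetCard]
    exact ⟨Finset.sdiff_subset_sdiff hTX le_rfl, by rw [Finset.card_sdiff_of_subset hST, hTc']⟩
  · intro T1 h1 T2 h2 h
    simp only [Finset.mem_filter, Finset.mem_powerset] at h1 h2
    have e1 : T1 \ S ∪ S = T1 := Finset.sdiff_union_of_subset h1.2
    have e2 : T2 \ S ∪ S = T2 := Finset.sdiff_union_of_subset h2.2
    rw [← e1, ← e2, h]
  · intro U hU
    rw [Finset.mem_powersetCard] at hU
    obtain ⟨hUX, hUc⟩ := hU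
    have hdUS : Disjoint U S := Finset.disjoint_of_subset_left hUX Finset.sdiff_disjoint
    refine ⟨U ∪ S, ?_, ?_⟩
    · simp only [Finset.mem_filter, Finset.mem_powerset]
      refine ⟨⟨Finset.union_subset (hUX.trans (Finset.sdiff_subset)) hS, ?_⟩,
        Finset.subset_union_right⟩
      rw [Finset.card_union_of_disjoint hdUS, hUc]
      push_cast
      omega
    · rw [Finset.union_sdiff_cancel_right hdUS]

lemma cast_even_char2 {F : Type*} [Field F] [CharP F 2] {m : ℕ} (h : Even m) :
    (m : F) = 0 :=
  (CharP.cast_eq_zero_iff F 2 m).mpr (even_iff_two_dvd.mp h)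

lemma cast_odd_char2 {F : Type*} [Field F] [CharP F 2] {m : ℕ} (h : Odd m) :
    (m : F) = 1 := by
  obtain ⟨r, hr⟩ := h
  subst hr
  push_cast
  have h2 : (2 : F) = 0 := by exact_mod_cast CharP.cast_eq_zero F 2
  rw [h2]
  ring

/-- Suspension Lemma: over a field of characteristic two, with
`t ≥ 1` and `0 ≤ ℓ < t`: if `v ∈ FΩ_k` satisfies `v φ_s^k = 0` for all `ℓ < s ≤ t`,
the support of `v` is disjoint from a set `X` of size `ℓ + t`, `C(ℓ+t, ℓ)` is odd
and `C(ℓ+(t-s), ℓ)` is even for all `0 < s ≤ ℓ`, then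
`v = (v · (X φ_ℓ^{ℓ+t})) φ_t^{k+t}`. -/
theorem suspension_lemma (F : Type*) [Field F] [CharP F 2] (n k l t : ℕ)
    (ht : 1 ≤ t) (hlt : l < t)
    (v : FOmega F n (k : ℤ))
    (hv : ∀ s : ℕ, l < s → s ≤ t → phi F n k ((k : ℤ) - s) v = 0)
    (X : Finset (Fin n)) (hX : (X.card : ℤ) = (l : ℤ) + t)
    (hdisj : Disjoint (suppSet v) X)
    (hodd : Odd ((l + t).choose l))
    (heven : ∀ s : ℕ, 0 < s → s ≤ l → Even ((l + (t - s)).choose l)) :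
    v = phi F n ((k : ℤ) + t) k
        (gmul ((k : ℤ) + t) v
          (phi F n ((l : ℤ) + t) t (Finsupp.single ⟨X, hX⟩ 1))) := by
  classical
  set w := phi F n ((l : ℤ) + t) t (Finsupp.single ⟨X, hX⟩ 1) with hw
  have hXcard : X.card = l + t := by exact_mod_cast hX
  have hWval : ∀ T : {s : Finset (Fin n) // (s.card : ℤ) = (t : ℤ)},
      w T = if T.1 ⊆ X then 1 else 0 := by
    rintro ⟨T, hT⟩
    rw [hw, coeff_phi_single]
  have hWsub : ∀ T ∈ w.support, T.1 ⊆ X := by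
    intro T hT
    by_contra h
    exact (Finsupp.mem_support_iff.mp hT) (by rw [hWval T, if_neg h])
  have hsuppv : ∀ A ∈ v.support, A.1 ⊆ suppSet v := fun A hA =>
    Finset.le_sup (f := fun Z : {s : Finset (Fin n) // (s.card : ℤ) = (k:ℤ)} => Z.1) hA
  ext B
  obtain ⟨B, hB⟩ := B
  set j := (B ∩ X).card with hj
  have hjk : j ≤ B.card := Finset.card_le_card Finset.inter_subset_left
  have hBcard : B.card = k := by exact_mod_cast hB
  -- key computation of RHS coefficient
  have hAT : ∀ (A : {x // x ∈ v.support}) (T : {x // x ∈ w.support}),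
      Disjoint A.1.1 T.1.1 ∧ ((A.1.1 ∪ T.1.1).card : ℤ) = (k : ℤ) + t := by
    intro A T
    have hd : Disjoint A.1.1 T.1.1 := hdisj.mono (hsuppv A.1 A.2) (hWsub T.1 T.2)
    refine ⟨hd, ?_⟩
    rw [Finset.card_union_of_disjoint hd, Nat.cast_add, A.1.2, T.1.2]
  have key : phi F n ((k : ℤ) + t) k (gmul ((k : ℤ) + t) v w) ⟨B, hB⟩
      = (∑ A ∈ v.support, if B \ X ⊆ A.1 then v A else 0)
        * ∑ T ∈ w.support, if B ∩ X ⊆ T.1 then w T else 0 := by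
    rw [gmul]
    calc (phi F n ((k : ℤ) + t) k (∑ A ∈ v.support.attach, ∑ T ∈ w.support.attach,
          if h : Disjoint A.1.1 T.1.1 ∧ ((A.1.1 ∪ T.1.1).card : ℤ) = (k : ℤ) + t then
            Finsupp.single ⟨A.1.1 ∪ T.1.1, h.2⟩ (v A.1 * w T.1)
          else 0)) ⟨B, hB⟩
        = ∑ A ∈ v.support.attach, ∑ T ∈ w.support.attach,
            (if B ⊆ A.1.1 ∪ T.1.1 then v A.1 * w T.1 else 0) := by
          rw [map_sum, Finsupp.finset_sum_apply]
          refine Finset.sum_congr rfl fun A _ => ?_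
          rw [map_sum, Finsupp.finset_sum_apply]
          refine Finset.sum_congr rfl fun T _ => ?_
          rw [dif_pos (hAT A T)]
          exact coeff_phi_single F n _ _ _ (hAT A T).2 _ B hB
      _ = ∑ A ∈ v.support.attach, ∑ T ∈ w.support.attach,
            (if B \ X ⊆ A.1.1 then v A.1 else 0) * (if B ∩ X ⊆ T.1.1 then w T.1 else 0) := by
          refine Finset.sum_congr rfl fun A _ => Finset.sum_congr rfl fun T _ => ?_
          have hdA : Disjoint A.1.1 X := hdisj.mono_left (hsuppv A.1 A.2)
          have hTX : T.1.1 ⊆ X := hWsub T.1 T.2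
          have hiff : B ⊆ A.1.1 ∪ T.1.1 ↔ (B \ X ⊆ A.1.1 ∧ B ∩ X ⊆ T.1.1) := by
            constructor
            · intro h
              constructor
              · intro x hx
                rcases Finset.mem_sdiff.mp hx with ⟨hxB, hxX⟩
                rcases Finset.mem_union.mp (h hxB) with h' | h'
                · exact h'
                · exact absurd (hTX h') hxX
              · intro x hx
                rcases Finset.mem_inter.mp hx with ⟨hxB, hxX⟩
                rcases Finset.mem_union.mp (h hxB) with h' | h'
                · exact absurd hxX (Finset.disjoint_left.mp hdA h')
                · exact h'
            · rintro ⟨h1, h2⟩ x hxB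
              by_cases hxX : x ∈ X
              · exact Finset.mem_union_right _ (h2 (Finset.mem_inter.mpr ⟨hxB, hxX⟩))
              · exact Finset.mem_union_left _ (h1 (Finset.mem_sdiff.mpr ⟨hxB, hxX⟩))
          by_cases h1 : B \ X ⊆ A.1.1 <;> by_cases h2 : B ∩ X ⊆ T.1.1 <;>
            simp [hiff, h1, h2]
      _ = (∑ A ∈ v.support.attach, if B \ X ⊆ A.1.1 then v A.1 else 0) *
          (∑ T ∈ w.support.attach, if B ∩ X ⊆ T.1.1 then w T.1 else 0) :=
          (Finset.sum_mul_sum _ _ _ _).symm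
      _ = _ := by
          rw [Finset.sum_attach v.support (fun A => if B \ X ⊆ A.1 then v A else 0),
            Finset.sum_attach w.support (fun T => if B ∩ X ⊆ T.1 then w T else 0)]
  -- the inner T-sum equals a binomial count
  set P : Finset (Finset (Fin n)) :=
    ((X.powerset.filter fun T => (T.card : ℤ) = (t : ℤ)).filter fun T => B ∩ X ⊆ T) with hP
  have hTsum : (∑ T ∈ w.support, if B ∩ X ⊆ T.1 then w T else 0) = (P.card : F) := by
    rw [Finset.sum_subset (Finset.subset_univ w.support)
      (fun T _ hT => by simp [Finsupp.notMem_support_iff.mp hT])]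
    have step : ∀ T : {s : Finset (Fin n) // (s.card : ℤ) = (t : ℤ)},
        (if B ∩ X ⊆ T.1 then w T else 0) = if T.1 ∈ P then (1 : F) else 0 := by
      intro T
      rw [hWval T]
      have hTc : T.1.card = t := by exact_mod_cast T.2
      by_cases h1 : B ∩ X ⊆ T.1 <;> by_cases h2 : T.1 ⊆ X <;>
        simp [hP, Finset.mem_filter, Finset.mem_powerset, h1, h2, hTc]
    rw [Finset.sum_congr rfl fun T _ => step T]
    rw [← Finset.sum_subtype (Finset.univ.filter fun s : Finset (Fin n) => (s.card : ℤ) = (t : ℤ))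
      (fun s => by simp) (fun s => if s ∈ P then (1 : F) else 0)]
    rw [Finset.sum_ite_mem]
    have hPsub : Finset.univ.filter (fun s : Finset (Fin n) => (s.card : ℤ) = (t : ℤ)) ∩ P = P := by
      apply Finset.inter_eq_right.mpr
      intro T hT
      rw [hP] at hT
      simp only [Finset.mem_filter, Finset.mem_powerset] at hT
      simp only [Finset.mem_filter, Finset.mem_univ, true_and]
      exact hT.1.2
    rw [hPsub, Finset.sum_const]
    simp
  rw [key, hTsum]
  rcases Nat.eq_zero_or_pos j with hj0 | hj0
  · -- j = 0
    have hBXempty : B ∩ X = ∅ := Finset.card_eq_zero.mp (hj ▸ hj0)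
    have hBX : B \ X = B := by
      rw [Finset.sdiff_eq_self_iff_disjoint]
      exact Finset.disjoint_iff_inter_eq_empty.mpr hBXempty
    have hN : P.card = (l + t).choose t := by
      rw [hP, hBXempty, count_supersets X ∅ (Finset.empty_subset X) t (by simp)]
      simp [hXcard]
    have hNodd : Odd P.card := by
      rw [hN, Nat.choose_symm_of_eq_add (Nat.add_comm l t)]
      exact hodd
    rw [cast_odd_char2 hNodd, mul_one, hBX]
    have hsum : (∑ A ∈ v.support, if B ⊆ A.1 then v A else 0)
        = ∑ A ∈ v.support, if A = ⟨B, hB⟩ then v A else 0 := by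
      refine Finset.sum_congr rfl fun A _ => ?_
      have hAcard : A.1.card = B.card := by
        exact_mod_cast A.2.trans hB.symm
      by_cases hsub : B ⊆ A.1
      · rw [if_pos hsub, if_pos (Subtype.ext
          (Finset.eq_of_subset_of_card_le hsub (le_of_eq hAcard)).symm)]
      · rw [if_neg hsub, if_neg fun h => hsub (by rw [h])]
    rw [hsum, Finset.sum_ite_eq' v.support ⟨B, hB⟩ (fun A => v A)]
    by_cases hmem : (⟨B, hB⟩ : {s : Finset (Fin n) // (s.card : ℤ) = (k : ℤ)}) ∈ v.support
    · rw [if_pos hmem]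
    · rw [if_neg hmem, Finsupp.notMem_support_iff.mp hmem]
  · -- j > 0
    have hvB : v ⟨B, hB⟩ = 0 := by
      by_contra hne
      have hmem : (⟨B, hB⟩ : {s : Finset (Fin n) // (s.card : ℤ) = (k : ℤ)}) ∈ v.support :=
        Finsupp.mem_support_iff.mpr hne
      have hBs : B ⊆ suppSet v := hsuppv _ hmem
      obtain ⟨x, hx⟩ := Finset.card_pos.mp (hj ▸ hj0)
      rcases Finset.mem_inter.mp hx with ⟨hxB, hxX⟩
      exact Finset.disjoint_left.mp hdisj (hBs hxB) hxX
    rw [hvB]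
    rcases le_or_gt j t with hjt | hjt
    · rcases le_or_gt j l with hjl | hjl
      · -- 0 < j ≤ l : count is even
        have hN : P.card = (l + (t - j)).choose l := by
          rw [hP, count_supersets X (B ∩ X) Finset.inter_subset_right t (by omega)]
          rw [hXcard, ← hj]
          have h1 : l + t - j = l + (t - j) := by omega
          rw [h1]
          exact Nat.choose_symm_of_eq_add (Nat.add_comm l (t - j))
        rw [cast_even_char2 (hN ▸ heven j hj0 hjl), mul_zero]
      · -- l < j ≤ t : phi vanishes
        have hcard : ((B \ X).card : ℤ) = (k : ℤ) - j := by
          have hsplit := Finset.card_sdiff_add_card_inter B X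
          omega
        rw [← coeff_phi F n (k : ℤ) ((k : ℤ) - j) v (B \ X) hcard, hv j hjl hjt]
        simp
    · -- j > t : count is zero
      have hPe : P = ∅ := by
        rw [hP, Finset.eq_empty_iff_forall_notMem]
        intro T hT
        simp only [Finset.mem_filter, Finset.mem_powerset] at hT
        obtain ⟨⟨hTX, hTc⟩, hST⟩ := hT
        have h1 : j ≤ T.card := hj ▸ Finset.card_le_card hST
        have h2 : T.card = t := by exact_mod_cast hTc
        omega
      rw [hPe]
      simp
end
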